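/- Let the ℤ/2-partial action σ on X = [-2,2] be given by σ_0 = id_X on X_0 = X and σ_1 : (-1,1) → (-1,1), σ_1(x) = -x. Then for all compact L, M ⊆ X the set ((L,M)) is compact, but the orbit space X/σ is not Hausdorff: the orbits [1] = {1} and [-1] = {-1} are distinct, yet every pair of open invariant sets U ∋ 1 and V ∋ -1 intersect. -/

import Mathlib

/-- The `ℤ/2`-partial action on `[-2,2]`: `σ_0 = id`, `σ_1(x) = -x` on `(-1,1)`. -/
noncomputable def act14 : ZMod 2 → ℝ → ℝ := fun t x => if t = 0 then x else -x

/-- Domains: `X_0 = [-2,2]`, `X_1 = (-1,1)`. -/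
def dom14 : ZMod 2 → Set ℝ := fun t => if t = 0 then Set.Icc (-2) 2 else Set.Ioo (-1) 1

/-- The orbit of a point `x ∈ [-2,2]` under the partial action. -/
noncomputable def orb14 (x : ℝ) : Set ℝ :=
  {y : ℝ | ∃ t : ZMod 2, x ∈ dom14 (-t) ∧ act14 t x = y}

/-- Invariance of a subset under the partial action. -/
def inv14 (U : Set ℝ) : Prop := ∀ x ∈ U, ∀ t : ZMod 2, x ∈ dom14 (-t) → act14 t x ∈ U

/-- For the `ℤ/2`-partial action `σ_0 = id` on `X = [-2,2]`, `σ_1(x) = -x` on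
`(-1,1)`: every set `((L,M))` (`L, M ⊆ X` compact) is compact (`ℤ/2` carries
the discrete topology), yet the orbit space is not Hausdorff: the orbits of `1`
and `-1` are distinct, but every invariant relatively open set containing `1`
meets every invariant relatively open set containing `-1`. -/
theorem zmod2_partial_action_orbit_space_not_hausdorff :
    (∀ L M : Set ℝ, L ⊆ Set.Icc (-2) 2 → M ⊆ Set.Icc (-2) 2 → IsCompact L → IsCompact M →
      @IsCompact (ZMod 2) ⊥ {t : ZMod 2 | ((act14 t '' (L ∩ dom14 (-t))) ∩ M).Nonempty}) ∧
    orb14 1 ≠ orb14 (-1) ∧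
    (∀ U V : Set ℝ, U ⊆ Set.Icc (-2) 2 → V ⊆ Set.Icc (-2) 2 →
      (∃ U' : Set ℝ, IsOpen U' ∧ U = U' ∩ Set.Icc (-2) 2) →
      (∃ V' : Set ℝ, IsOpen V' ∧ V = V' ∩ Set.Icc (-2) 2) →
      inv14 U → inv14 V → (1 : ℝ) ∈ U → (-1 : ℝ) ∈ V → (U ∩ V).Nonempty) := by
  refine ⟨fun L M _ _ _ _ => @Set.Finite.isCompact _ ⊥ _ (Set.toFinite _), ?_, ?_⟩
  · -- orbits of 1 and -1 differ: 1 ∈ orb14 1 but 1 ∉ orb14 (-1)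
    intro h
    have h1 : (1 : ℝ) ∈ orb14 1 := ⟨0, by norm_num [dom14], by norm_num [act14]⟩
    rw [h] at h1
    obtain ⟨t, ht, hact⟩ := h1
    fin_cases t
    · norm_num [act14] at hact
      exact hact rfl
    · simp [dom14, show -(1 : ZMod 2) ≠ 0 by decide] at ht
      rw [if_neg (by decide)] at ht
      simp at ht

  · rintro U V hU hV ⟨U', hU'o, rfl⟩ ⟨V', hV'o, rfl⟩ hUinv hVinv h1 hm1
    obtain ⟨ε, hε, hεball⟩ := Metric.isOpen_iff.mp hU'o 1 h1.1
    obtain ⟨δ, hδ, hδball⟩ := Metric.isOpen_iff.mp hV'o (-1) hm1.1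
    set e := min (min ε δ) 1 with he
    have he0 : 0 < e := by positivity
    have he1 : e ≤ 1 := min_le_right _ _
    set z : ℝ := 1 - e / 2 with hz
    have hz0 : 0 < z := by simp only [hz]; linarith
    have hz1 : z < 1 := by simp only [hz]; linarith
    have hzU : z ∈ U' ∩ Set.Icc (-2) 2 := by
      constructor
      · apply hεball
        rw [Metric.mem_ball, Real.dist_eq]
        have : |z - 1| = e / 2 := by rw [hz]; rw [abs_of_nonpos] <;> linarith
        rw [this]
        have : e ≤ ε := le_trans (min_le_left _ _) (min_le_left _ _)
        linarith
      · constructor <;> linarith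
    have hzV' : -z ∈ V' ∩ Set.Icc (-2) 2 := by
      constructor
      · apply hδball
        rw [Metric.mem_ball, Real.dist_eq]
        have : |(-z) - (-1)| = e / 2 := by
          rw [hz, show -(1 - e/2) - (-1) = e/2 by ring, abs_of_nonneg] ; linarith
        rw [this]
        have : e ≤ δ := le_trans (min_le_left _ _) (min_le_right _ _)
        linarith
      · constructor <;> linarith
    have hdom : -z ∈ dom14 (-(1 : ZMod 2)) := by
      simp [dom14, show -(1 : ZMod 2) ≠ 0 by decide]
      constructor <;> linarith
    have hzV : z ∈ V' ∩ Set.Icc (-2) 2 := by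
      have := hVinv (-z) hzV' 1 hdom
      simpa [act14, show (1 : ZMod 2) ≠ 0 by decide] using this
    exact ⟨z, hzU, hzV⟩
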